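/- arXiv:1801.01856 — 3 statements merged into one kernel-verified Lean document; each statement's English description precedes it below -/
import Mathlib

section
/- If S, I are nonnegative differentiable solutions of the epidemic system with 1 ≤ p ≤ q + 1, then ∫₀^∞ τ I(t)^p/(1 + κ I(t)^q) dt ≤ τ · max(1, 1/κ) · (S(0) + I(0))/λ < ∞. -/
open MeasureTheory Set

/-- Pointwise bound: for `x ≥ 0`, `x^p / (1 + κ x^q) ≤ max 1 (1/κ) * x`. -/
lemma key_bound5 (κ p q x : ℝ) (hκ : 0 < κ) (hp : 0 < p) (hq : 0 < q)
    (hp1 : 1 ≤ p) (hpq : p ≤ q + 1) (hx : 0 ≤ x) :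
    x ^ p / (1 + κ * x ^ q) ≤ max 1 (1 / κ) * x := by
  have hxq : (0:ℝ) ≤ x ^ q := Real.rpow_nonneg hx q
  have hden : (0:ℝ) < 1 + κ * x ^ q := by positivity
  rcases le_or_gt x 1 with hx1 | hx1
  · -- x ≤ 1 : x^p ≤ x and denominator ≥ 1
    have hxp : x ^ p ≤ x := by
      rcases eq_or_lt_of_le hx with h0 | h0
      · simp [← h0, Real.zero_rpow (ne_of_gt hp)]
      · calc x ^ p ≤ x ^ (1:ℝ) :=
            Real.rpow_le_rpow_of_exponent_ge h0 hx1 hp1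
          _ = x := Real.rpow_one x
    have h1 : x ^ p / (1 + κ * x ^ q) ≤ x ^ p := by
      apply div_le_self (Real.rpow_nonneg hx p)
      nlinarith [mul_nonneg hκ.le hxq]
    have : (1:ℝ) * x ≤ max 1 (1/κ) * x :=
      mul_le_mul_of_nonneg_right (le_max_left _ _) hx
    linarith [h1.trans hxp]
  · -- x > 1 : x^p ≤ x^q * x and denominator ≥ κ x^q
    have hx0 : (0:ℝ) < x := lt_trans one_pos hx1
    have hxp : x ^ p ≤ x ^ q * x := by
      calc x ^ p ≤ x ^ (q + 1) :=
          Real.rpow_le_rpow_of_exponent_le (le_of_lt hx1) hpq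
        _ = x ^ q * x := by
          rw [Real.rpow_add hx0, Real.rpow_one]
    have hxqpos : (0:ℝ) < x ^ q := Real.rpow_pos_of_pos hx0 q
    have h1 : x ^ p / (1 + κ * x ^ q) ≤ (x ^ q * x) / (κ * x ^ q) := by
      apply div_le_div₀ (by positivity) hxp (by positivity)
      linarith
    have h2 : (x ^ q * x) / (κ * x ^ q) = (1/κ) * x := by
      field_simp
    have h3 : (1/κ) * x ≤ max 1 (1/κ) * x :=
      mul_le_mul_of_nonneg_right (le_max_right _ _) (le_of_lt hx0)
    calc x ^ p / (1 + κ * x ^ q) ≤ (x ^ q * x) / (κ * x ^ q) := h1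
      _ = (1/κ) * x := h2
      _ ≤ max 1 (1/κ) * x := h3

theorem stmt5 (τ κ lam p q : ℝ) (hτ : 0 < τ) (hκ : 0 < κ) (hlam : 0 < lam)
    (hp : 0 < p) (hq : 0 < q) (hp1 : 1 ≤ p) (hpq : p ≤ q + 1) (S I : ℝ → ℝ)
    (hSpos : ∀ t, 0 ≤ t → 0 ≤ S t) (hIpos : ∀ t, 0 ≤ t → 0 ≤ I t)
    (hS : ∀ t, 0 ≤ t → HasDerivAt S (-(τ * I t ^ p * S t / (1 + κ * I t ^ q))) t)
    (hI : ∀ t, 0 ≤ t → HasDerivAt I (τ * I t ^ p * S t / (1 + κ * I t ^ q) - lam * I t) t)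
    (hcont : Continuous I) :
    MeasureTheory.IntegrableOn (fun t => τ * I t ^ p / (1 + κ * I t ^ q)) (Set.Ici 0) ∧
      ∫ t in Set.Ici (0:ℝ), τ * I t ^ p / (1 + κ * I t ^ q)
        ≤ τ * max 1 (1 / κ) * (S 0 + I 0) / lam := by
  set N : ℝ → ℝ := fun t => S t + I t with hN
  -- FTC bound on ∫₀^T I
  have hFTC : ∀ T : ℝ, 0 ≤ T → ∫ t in (0:ℝ)..T, I t ≤ (S 0 + I 0) / lam := by
    intro T hT
    have hderiv : ∀ t ∈ Set.uIcc (0:ℝ) T, HasDerivAt N (-(lam * I t)) t := by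
      intro t ht
      rw [Set.uIcc_of_le hT] at ht
      have ht0 : 0 ≤ t := ht.1
      have := (hS t ht0).add (hI t ht0)
      exact this.congr_deriv (by ring)
    have hint : IntervalIntegrable (fun t => -(lam * I t)) volume 0 T :=
      (Continuous.intervalIntegrable (by continuity) _ _)
    have heq := intervalIntegral.integral_eq_sub_of_hasDerivAt hderiv hint
    have hNT : 0 ≤ N T := add_nonneg (hSpos T hT) (hIpos T hT)
    have hInt : ∫ t in (0:ℝ)..T, (-(lam * I t)) = N T - N 0 := heq
    have h1 : ∫ t in (0:ℝ)..T, (-(lam * I t)) = -(lam * ∫ t in (0:ℝ)..T, I t) := by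
      rw [intervalIntegral.integral_neg, intervalIntegral.integral_const_mul]
    rw [h1] at hInt
    have : lam * ∫ t in (0:ℝ)..T, I t ≤ N 0 := by
      have : lam * ∫ t in (0:ℝ)..T, I t = N 0 - N T := by linarith
      linarith
    rw [le_div_iff₀ hlam]
    calc (∫ t in (0:ℝ)..T, I t) * lam = lam * ∫ t in (0:ℝ)..T, I t := by ring
      _ ≤ N 0 := this
      _ = S 0 + I 0 := rfl
  -- integrability of I on Ioi 0
  have hIinteg : IntegrableOn I (Set.Ioi (0:ℝ)) := by
    apply MeasureTheory.integrableOn_Ioi_of_intervalIntegral_norm_bounded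
      (b := fun T : ℝ => T) ((S 0 + I 0) / lam) 0
      (fun i : ℝ => (hcont.integrableOn_Ioc)) Filter.tendsto_id
    filter_upwards [Filter.eventually_ge_atTop (0:ℝ)] with T hT
    have : ∫ t in (0:ℝ)..T, ‖I t‖ = ∫ t in (0:ℝ)..T, I t := by
      apply intervalIntegral.integral_congr
      intro t ht
      rw [Set.uIcc_of_le hT] at ht
      exact Real.norm_of_nonneg (hIpos t ht.1)
    rw [this]
    exact hFTC T hT
  have hIintegIci : IntegrableOn I (Set.Ici (0:ℝ)) := by
    rwa [integrableOn_Ici_iff_integrableOn_Ioi]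
  -- ∫ over Ici of I
  have hIint_le : ∫ t in Set.Ici (0:ℝ), I t ≤ (S 0 + I 0) / lam := by
    rw [MeasureTheory.integral_Ici_eq_integral_Ioi]
    have htend := MeasureTheory.intervalIntegral_tendsto_integral_Ioi 0 hIinteg
      (Filter.tendsto_id (α := ℝ))
    apply le_of_tendsto htend
    filter_upwards [Filter.eventually_ge_atTop (0:ℝ)] with T hT
    exact hFTC T hT
  set C : ℝ := τ * max 1 (1/κ) with hC
  have hCpos : 0 < C := by
    apply mul_pos hτ
    exact lt_of_lt_of_le one_pos (le_max_left _ _)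
  -- pointwise bound on Ici 0
  have hbd : ∀ t ∈ Set.Ici (0:ℝ), τ * I t ^ p / (1 + κ * I t ^ q) ≤ C * I t := by
    intro t ht
    have h := key_bound5 κ p q (I t) hκ hp hq hp1 hpq (hIpos t ht)
    have : τ * (I t ^ p / (1 + κ * I t ^ q)) ≤ τ * (max 1 (1/κ) * I t) :=
      mul_le_mul_of_nonneg_left h (le_of_lt hτ)
    calc τ * I t ^ p / (1 + κ * I t ^ q) = τ * (I t ^ p / (1 + κ * I t ^ q)) := by ring
      _ ≤ τ * (max 1 (1/κ) * I t) := this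
      _ = C * I t := by rw [hC]; ring
  have hnonneg : ∀ t ∈ Set.Ici (0:ℝ), 0 ≤ τ * I t ^ p / (1 + κ * I t ^ q) := by
    intro t ht
    have hI0 := hIpos t ht
    have : (0:ℝ) ≤ I t ^ q := Real.rpow_nonneg hI0 q
    have hden : (0:ℝ) < 1 + κ * I t ^ q := by positivity
    have : (0:ℝ) ≤ I t ^ p := Real.rpow_nonneg hI0 p
    positivity
  -- measurability
  have hmeas : AEStronglyMeasurable (fun t => τ * I t ^ p / (1 + κ * I t ^ q))
      (volume.restrict (Set.Ici (0:ℝ))) := by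
    apply Measurable.aestronglyMeasurable
    have hnum : Measurable fun t => τ * I t ^ p :=
      (continuous_const.mul ((Real.continuous_rpow_const hp.le).comp hcont)).measurable
    have hden : Measurable fun t => 1 + κ * I t ^ q :=
      (continuous_const.add
        (continuous_const.mul ((Real.continuous_rpow_const hq.le).comp hcont))).measurable
    exact hnum.div hden
  have hCIint : IntegrableOn (fun t => C * I t) (Set.Ici (0:ℝ)) :=
    hIintegIci.const_mul C
  -- integrability of the integrand
  have hginteg : IntegrableOn (fun t => τ * I t ^ p / (1 + κ * I t ^ q)) (Set.Ici 0) := by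
    apply MeasureTheory.Integrable.mono' hCIint hmeas
    filter_upwards [MeasureTheory.ae_restrict_mem measurableSet_Ici] with t ht
    rw [Real.norm_of_nonneg (hnonneg t ht)]
    exact hbd t ht
  refine ⟨hginteg, ?_⟩
  have hmono : ∫ t in Set.Ici (0:ℝ), τ * I t ^ p / (1 + κ * I t ^ q)
      ≤ ∫ t in Set.Ici (0:ℝ), C * I t :=
    MeasureTheory.setIntegral_mono_on hginteg hCIint measurableSet_Ici hbd
  have h2 : ∫ t in Set.Ici (0:ℝ), C * I t = C * ∫ t in Set.Ici (0:ℝ), I t :=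
    integral_const_mul C I
  calc ∫ t in Set.Ici (0:ℝ), τ * I t ^ p / (1 + κ * I t ^ q)
      ≤ C * ∫ t in Set.Ici (0:ℝ), I t := by rw [← h2]; exact hmono
    _ ≤ C * ((S 0 + I 0) / lam) :=
        mul_le_mul_of_nonneg_left hIint_le (le_of_lt hCpos)
    _ = τ * max 1 (1 / κ) * (S 0 + I 0) / lam := by rw [hC]; ring
end

section
/- If S, I are nonnegative differentiable solutions of the epidemic system with S(0) > 0 and 1 ≤ p ≤ q + 1, then S(t) converges as t → ∞ to a strictly positive limit S∞ = S(0) · exp(-∫₀^∞ τ I(t)^p/(1+κ I(t)^q) dt) > 0. -/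
open MeasureTheory Filter Set intervalIntegral

theorem stmt7 (τ κ lam p q : ℝ) (hτ : 0 < τ) (hκ : 0 < κ) (hlam : 0 < lam)
    (hp : 0 < p) (hq : 0 < q) (hp1 : 1 ≤ p) (hpq : p ≤ q + 1) (S I : ℝ → ℝ)
    (hS0 : 0 < S 0)
    (hSpos : ∀ t, 0 ≤ t → 0 ≤ S t) (hIpos : ∀ t, 0 ≤ t → 0 ≤ I t)
    (hS : ∀ t, 0 ≤ t → HasDerivAt S (-(τ * I t ^ p * S t / (1 + κ * I t ^ q))) t)
    (hI : ∀ t, 0 ≤ t → HasDerivAt I (τ * I t ^ p * S t / (1 + κ * I t ^ q) - lam * I t) t)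
    (hcont : Continuous I) :
    Filter.Tendsto S Filter.atTop
      (nhds (S 0 * Real.exp (-∫ t in Set.Ici (0:ℝ), τ * I t ^ p / (1 + κ * I t ^ q)))) ∧
    0 < S 0 * Real.exp (-∫ t in Set.Ici (0:ℝ), τ * I t ^ p / (1 + κ * I t ^ q)) := by
  set f : ℝ → ℝ := fun x => τ * I x ^ p / (1 + κ * I x ^ q) with hf_def
  -- denominator bounds
  have hden : ∀ x, 0 ≤ x → (1:ℝ) ≤ 1 + κ * I x ^ q := by
    intro x hx
    have h1 : 0 ≤ κ * I x ^ q := mul_nonneg hκ.le (Real.rpow_nonneg (hIpos x hx) q)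
    linarith
  have hdenpos : ∀ x, 0 ≤ x → (0:ℝ) < 1 + κ * I x ^ q := fun x hx =>
    lt_of_lt_of_le one_pos (hden x hx)
  -- continuity
  have hnum : Continuous fun x => τ * I x ^ p :=
    continuous_const.mul (hcont.rpow_const fun x => Or.inr hp.le)
  have hden_cont : Continuous fun x => 1 + κ * I x ^ q :=
    continuous_const.add (continuous_const.mul (hcont.rpow_const fun x => Or.inr hq.le))
  have hfca : ∀ x, 0 ≤ x → ContinuousAt f x := fun x hx =>
    hnum.continuousAt.div hden_cont.continuousAt (ne_of_gt (hdenpos x hx))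
  have hfmeas : Measurable f := hnum.measurable.div hden_cont.measurable
  have hfint : ∀ T, 0 ≤ T → IntervalIntegrable f volume 0 T := by
    intro T hT
    apply ContinuousOn.intervalIntegrable
    rw [Set.uIcc_of_le hT]
    exact fun x hx => (hfca x hx.1).continuousWithinAt
  -- primitive
  set F : ℝ → ℝ := fun t => ∫ x in (0:ℝ)..t, f x with hF_def
  have hFd : ∀ t, 0 ≤ t → HasDerivAt F (f t) t := fun t ht =>
    intervalIntegral.integral_hasDerivAt_right (hfint t ht)
      ⟨Set.univ, Filter.univ_mem, hfmeas.aestronglyMeasurable.restrict⟩ (hfca t ht)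
  -- constancy of S * exp F
  have hkey : ∀ t, 0 ≤ t → S t * Real.exp (F t) = S 0 := by
    intro t ht
    have hc : ∀ x ∈ Set.Icc (0:ℝ) t, HasDerivAt (fun u => S u * Real.exp (F u)) 0 x := by
      intro x hx
      have hx0 := hx.1
      have hd := (hS x hx0).mul ((hFd x hx0).exp)
      refine hd.congr_deriv ?_
      have hne : (1 + κ * I x ^ q) ≠ 0 := ne_of_gt (hdenpos x hx0)
      simp only [hf_def]
      ring
    have hconst := constant_of_has_deriv_right_zero
      (f := fun u => S u * Real.exp (F u)) (a := 0) (b := t)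
      (fun x hx => ((hc x hx).continuousAt).continuousWithinAt)
      (fun x hx => (hc x ⟨hx.1, hx.2.le⟩).hasDerivWithinAt)
      t ⟨ht, le_refl t⟩
    have hF0 : F 0 = 0 := intervalIntegral.integral_same
    simpa [hF0] using hconst
  have hSeq : ∀ t, 0 ≤ t → S t = S 0 * Real.exp (-F t) := by
    intro t ht
    rw [← hkey t ht, Real.exp_neg, mul_assoc, mul_inv_cancel₀ (Real.exp_ne_zero _), mul_one]
  -- V = S + I antitone
  have hV : ∀ x, 0 ≤ x → HasDerivAt (fun u => S u + I u) (-(lam * I x)) x := by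
    intro x hx
    have := (hS x hx).add (hI x hx)
    refine this.congr_deriv ?_
    ring
  set C0 : ℝ := S 0 + I 0 with hC0
  have hC0pos : 0 < C0 := by
    have := hIpos 0 le_rfl
    simp only [hC0]; linarith
  have hVanti : AntitoneOn (fun u => S u + I u) (Set.Ici (0:ℝ)) := by
    refine antitoneOn_of_deriv_nonpos (convex_Ici 0)
      (fun x hx => ((hV x hx).continuousAt).continuousWithinAt) ?_ ?_
    · intro x hx
      rw [interior_Ici] at hx
      exact ((hV x hx.le).differentiableAt).differentiableWithinAt
    · intro x hx
      rw [interior_Ici] at hx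
      rw [(hV x hx.le).deriv]
      have := hIpos x hx.le
      nlinarith
  have hIbdd : ∀ x, 0 ≤ x → I x ≤ C0 := by
    intro x hx
    have h1 : S x + I x ≤ S 0 + I 0 := hVanti (Set.self_mem_Ici) hx hx
    have h2 := hSpos x hx
    simp only [hC0]; linarith
  -- integral of lam * I bounded
  have hIlam : ∀ T, 0 ≤ T → (∫ x in (0:ℝ)..T, lam * I x) ≤ C0 := by
    intro T hT
    have heq : ∫ x in (0:ℝ)..T, -(lam * I x) = (S T + I T) - (S 0 + I 0) := by
      apply intervalIntegral.integral_eq_sub_of_hasDerivAt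
      · intro x hx
        rw [Set.uIcc_of_le hT] at hx
        exact hV x hx.1
      · exact ((continuous_const.mul hcont).neg).intervalIntegrable 0 T
    rw [intervalIntegral.integral_neg] at heq
    have h1 := hSpos T hT
    have h2 := hIpos T hT
    simp only [hC0]; linarith
  -- pointwise bound
  set c : ℝ := τ * C0 ^ (p - 1) / lam with hc_def
  have hcpos : 0 ≤ c := by
    apply div_nonneg _ hlam.le
    exact mul_nonneg hτ.le (Real.rpow_nonneg hC0pos.le _)
  have hfb : ∀ x, 0 ≤ x → f x ≤ c * (lam * I x) := by
    intro x hx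
    have hIx := hIpos x hx
    have hb1 : f x ≤ τ * I x ^ p := by
      apply div_le_self (mul_nonneg hτ.le (Real.rpow_nonneg hIx p)) (hden x hx)
    have hb2 : τ * I x ^ p ≤ τ * (C0 ^ (p - 1) * I x) := by
      apply mul_le_mul_of_nonneg_left _ hτ.le
      rcases eq_or_lt_of_le hIx with h0 | h0
      · rw [← h0, Real.zero_rpow (ne_of_gt hp)]
        positivity
      · have hpe : I x ^ p = I x ^ (p - 1) * I x := by
          rw [← Real.rpow_add_one (ne_of_gt h0) (p - 1), show p - 1 + 1 = p by ring]
        rw [hpe]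
        apply mul_le_mul_of_nonneg_right _ hIx
        exact Real.rpow_le_rpow hIx (hIbdd x hx) (by linarith)
    have : c * (lam * I x) = τ * (C0 ^ (p - 1) * I x) := by
      rw [hc_def]
      field_simp
    rw [this]
    exact hb1.trans hb2
  -- integrability on Ioi 0
  have hB : ∀ T, 0 ≤ T → (∫ x in (0:ℝ)..T, ‖f x‖) ≤ c * C0 := by
    intro T hT
    have h1 : (∫ x in (0:ℝ)..T, ‖f x‖) = ∫ x in (0:ℝ)..T, f x := by
      apply intervalIntegral.integral_congr
      intro x hx
      rw [Set.uIcc_of_le hT] at hx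
      exact Real.norm_of_nonneg (by
        apply div_nonneg (mul_nonneg hτ.le (Real.rpow_nonneg (hIpos x hx.1) p))
          (hdenpos x hx.1).le)
    rw [h1]
    have h2 : (∫ x in (0:ℝ)..T, f x) ≤ ∫ x in (0:ℝ)..T, c * (lam * I x) := by
      apply intervalIntegral.integral_mono_on hT (hfint T hT)
        ((continuous_const.mul (continuous_const.mul hcont)).intervalIntegrable 0 T)
      exact fun x hx => hfb x hx.1
    have h3 : (∫ x in (0:ℝ)..T, c * (lam * I x)) = c * ∫ x in (0:ℝ)..T, lam * I x := by
      rw [← intervalIntegral.integral_const_mul]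
    calc (∫ x in (0:ℝ)..T, f x) ≤ ∫ x in (0:ℝ)..T, c * (lam * I x) := h2
      _ = c * ∫ x in (0:ℝ)..T, lam * I x := h3
      _ ≤ c * C0 := mul_le_mul_of_nonneg_left (hIlam T hT) hcpos
  have hfInt : IntegrableOn f (Set.Ioi (0:ℝ)) := by
    refine MeasureTheory.integrableOn_Ioi_of_intervalIntegral_norm_bounded (c * C0) 0
      (b := fun T : ℝ => T) (l := atTop) (fun T => ?_) tendsto_id ?_
    · rcases le_or_gt 0 T with h | h
      · exact (hfint T h).1
      · rw [Set.Ioc_eq_empty (by simpa using h.le)]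
        exact integrableOn_empty
    · filter_upwards [eventually_ge_atTop (0:ℝ)] with T hT using hB T hT
  -- conclusion
  have hFt : Tendsto F atTop (nhds (∫ x in Set.Ioi (0:ℝ), f x)) :=
    MeasureTheory.intervalIntegral_tendsto_integral_Ioi 0 hfInt tendsto_id
  have hIciIoi : (∫ t in Set.Ici (0:ℝ), f t) = ∫ t in Set.Ioi (0:ℝ), f t :=
    MeasureTheory.integral_Ici_eq_integral_Ioi
  constructor
  · rw [hIciIoi]
    have h1 : Tendsto (fun t => S 0 * Real.exp (-F t)) atTop
        (nhds (S 0 * Real.exp (-∫ x in Set.Ioi (0:ℝ), f x))) := by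
      exact ((Real.continuous_exp.tendsto _).comp hFt.neg).const_mul (S 0)
    apply h1.congr'
    filter_upwards [eventually_ge_atTop (0:ℝ)] with t ht
    exact (hSeq t ht).symm
  · positivity
end

section
/- Suppose S, I are twice differentiable nonnegative solutions of the epidemic system with S(t̄) > 0, I(t̄) > 0, and S'(t̄) < 0 at a time t̄ where I'(t̄) = 0. Then I''(t̄) = τ I(t̄)^p S'(t̄)/(1 + κ I(t̄)^q) < 0; i.e., every interior critical point of I with positive state values is a strict local maximum. -/
theorem stmt9 (τ κ lam p q : ℝ) (hτ : 0 < τ) (hκ : 0 < κ) (hlam : 0 < lam)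
    (hp : 0 < p) (hq : 0 < q) (S I S' I'' : ℝ → ℝ) (tbar : ℝ) (htbar : 0 < tbar)
    (hSpos : ∀ t, 0 ≤ t → 0 ≤ S t) (hIpos : ∀ t, 0 ≤ t → 0 ≤ I t)
    (hS : ∀ t, 0 ≤ t → HasDerivAt S (S' t) t)
    (hSeq : ∀ t, 0 ≤ t → S' t = -(τ * I t ^ p * S t / (1 + κ * I t ^ q)))
    (hI : ∀ t, 0 ≤ t →
      HasDerivAt I (τ * I t ^ p * S t / (1 + κ * I t ^ q) - lam * I t) t)
    (hI'' : HasDerivAt (fun t => τ * I t ^ p * S t / (1 + κ * I t ^ q) - lam * I t)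
      (I'' tbar) tbar)
    (hStbar : 0 < S tbar) (hItbar : 0 < I tbar)
    (hS'neg : S' tbar < 0)
    (hcrit : τ * I tbar ^ p * S tbar / (1 + κ * I tbar ^ q) - lam * I tbar = 0) :
    I'' tbar = τ * I tbar ^ p * S' tbar / (1 + κ * I tbar ^ q) ∧ I'' tbar < 0 := by
  have ht0 : (0:ℝ) ≤ tbar := htbar.le
  have hI0 : HasDerivAt I 0 tbar := hcrit ▸ hI tbar ht0
  have hIne : I tbar ≠ 0 := hItbar.ne'
  have hDpos : 0 < 1 + κ * I tbar ^ q := by positivity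
  have hDne : (1 + κ * I tbar ^ q) ≠ 0 := hDpos.ne'
  have hrp : HasDerivAt (fun t => I t ^ p) (0 * p * I tbar ^ (p - 1)) tbar :=
    hI0.rpow_const (Or.inl hIne)
  have hrq : HasDerivAt (fun t => I t ^ q) (0 * q * I tbar ^ (q - 1)) tbar :=
    hI0.rpow_const (Or.inl hIne)
  have hN : HasDerivAt (fun t => τ * I t ^ p * S t)
      ((τ * (0 * p * I tbar ^ (p - 1))) * S tbar + (τ * I tbar ^ p) * S' tbar) tbar :=
    ((hrp.const_mul τ).mul (hS tbar ht0))
  have hD : HasDerivAt (fun t => 1 + κ * I t ^ q)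
      (0 + κ * (0 * q * I tbar ^ (q - 1))) tbar :=
    (hasDerivAt_const tbar (1:ℝ)).add (hrq.const_mul κ)
  have hF : HasDerivAt (fun t => τ * I t ^ p * S t / (1 + κ * I t ^ q) - lam * I t)
      (τ * I tbar ^ p * S' tbar / (1 + κ * I tbar ^ q)) tbar := by
    have := ((hN.div hD hDne).sub (hI0.const_mul lam))
    refine this.congr_deriv ?_
    field_simp
    ring
  have heq : I'' tbar = τ * I tbar ^ p * S' tbar / (1 + κ * I tbar ^ q) :=
    hI''.unique hF
  refine ⟨heq, ?_⟩
  rw [heq]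
  have hIp : 0 < I tbar ^ p := Real.rpow_pos_of_pos hItbar p
  have : τ * I tbar ^ p * S' tbar < 0 := mul_neg_of_pos_of_neg (by positivity) hS'neg
  exact div_neg_of_neg_of_pos this hDpos
end
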